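/- arXiv:2304.11417 — 3 statements merged into one kernel-verified Lean document; each statement's English description precedes it below -/
import Mathlib

section
/- Let G be a second-countable, locally compact, unimodular topological group with Haar measure μ, let (π,H) be a unitary representation of G, let d be a natural number, and let (S_r)_{r>0} be a family of measurable subsets of G with μ(S_r) < ∞ and S_r⁻¹ = S_r for every r. Let V ⊆ H be a ℂ-linear subspace, let A : H → H be a ℂ-linear map with A(V) ⊆ V, and let D : H×H×H×H → ℂ be a function such that for all v₁, v₂, v₃, v₄ ∈ V the quantity r^{-d} ∫_{S_r} ⟨π(g)v₁,v₂⟩ · conj(⟨π(g)v₃,v₄⟩) dμ(g) tends to D(v₁,v₂,v₃,v₄) as r → ∞. If D(Av₁, v₂, v₃, v₄) = -D(v₁, v₂, Av₃, v₄) for all v₁, v₂, v₃, v₄ ∈ V, then D(v₁, Av₂, v₃, v₄) = -D(v₁, v₂, v₃, Av₄) for all v₁, v₂, v₃, v₄ ∈ V. -/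
open MeasureTheory Filter ComplexConjugate
open scoped InnerProductSpace ENNReal Topology

lemma setIntegral_inv_eq {G : Type*} [Group G] [MeasurableSpace G] [MeasurableInv G]
    (μ : Measure G) [μ.IsInvInvariant] {S : Set G} (hS : MeasurableSet S) (hSi : S⁻¹ = S)
    (f : G → ℂ) : ∫ g in S, f g⁻¹ ∂μ = ∫ g in S, f g ∂μ := by
  rw [← integral_indicator hS, ← integral_indicator hS]
  have : ∀ x, S.indicator (fun g => f g⁻¹) x = S.indicator f x⁻¹ := by
    intro x
    simp only [Set.indicator]
    have hx : x⁻¹ ∈ S ↔ x ∈ S := by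
      conv_lhs => rw [← hSi]
      exact Set.inv_mem_inv
    by_cases h : x ∈ S
    · rw [if_pos h, if_pos (hx.mpr h)]
    · rw [if_neg h, if_neg (fun hc => h (hx.mp hc))]
  simp_rw [this]
  exact integral_inv_eq_self (S.indicator f) μ

/-- (Abstract form of Lemma 4.1.) If the limits
`D(v₁,v₂,v₃,v₄) = lim_{r→∞} r^{-d} ∫_{S_r} ⟨π(g)v₁,v₂⟩ conj ⟨π(g)v₃,v₄⟩ dμ` exist on a
subspace `V` preserved by a linear map `A`, and `D(Av₁,v₂,v₃,v₄) = -D(v₁,v₂,Av₃,v₄)` on `V`,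
then also `D(v₁,Av₂,v₃,v₄) = -D(v₁,v₂,v₃,Av₄)` on `V`. The paper's inner product `⟨x,y⟩`,
linear in the first variable, is rendered as Mathlib's `⟪y, x⟫_ℂ`. -/
theorem stmt1 {G H : Type*} [Group G] [TopologicalSpace G] [IsTopologicalGroup G]
    [LocallyCompactSpace G] [SecondCountableTopology G]
    [MeasurableSpace G] [BorelSpace G]
    (μ : Measure G) [μ.IsHaarMeasure] [μ.IsInvInvariant]
    [NormedAddCommGroup H] [InnerProductSpace ℂ H]
    (π : G →* (H →L[ℂ] H))
    (hunit : ∀ (g : G) (u w : H), ⟪π g u, π g w⟫_ℂ = ⟪u, w⟫_ℂ)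
    (hcont : ∀ u : H, Continuous fun g : G => π g u)
    (d : ℕ) (S : ℝ → Set G)
    (hSmeas : ∀ r > (0 : ℝ), MeasurableSet (S r))
    (hSfin : ∀ r > (0 : ℝ), μ (S r) < ∞)
    (hSinv : ∀ r > (0 : ℝ), (S r)⁻¹ = S r)
    (V : Submodule ℂ H) (A : H →ₗ[ℂ] H) (hAV : ∀ v ∈ V, A v ∈ V)
    (D : H → H → H → H → ℂ)
    (hlim : ∀ v₁ ∈ V, ∀ v₂ ∈ V, ∀ v₃ ∈ V, ∀ v₄ ∈ V,
      Tendsto (fun r : ℝ =>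
          (r ^ d)⁻¹ • ∫ g in S r, ⟪v₂, π g v₁⟫_ℂ * conj ⟪v₄, π g v₃⟫_ℂ ∂μ)
        atTop (𝓝 (D v₁ v₂ v₃ v₄)))
    (hD : ∀ v₁ ∈ V, ∀ v₂ ∈ V, ∀ v₃ ∈ V, ∀ v₄ ∈ V,
      D (A v₁) v₂ v₃ v₄ = -D v₁ v₂ (A v₃) v₄) :
    ∀ v₁ ∈ V, ∀ v₂ ∈ V, ∀ v₃ ∈ V, ∀ v₄ ∈ V,
      D v₁ (A v₂) v₃ v₄ = -D v₁ v₂ v₃ (A v₄) := by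
  -- key symmetry: D v₁ v₂ v₃ v₄ = D v₄ v₃ v₂ v₁
  have hsym : ∀ v₁ ∈ V, ∀ v₂ ∈ V, ∀ v₃ ∈ V, ∀ v₄ ∈ V,
      D v₁ v₂ v₃ v₄ = D v₄ v₃ v₂ v₁ := by
    intro v₁ h₁ v₂ h₂ v₃ h₃ v₄ h₄
    refine tendsto_nhds_unique ?_ (hlim v₄ h₄ v₃ h₃ v₂ h₂ v₁ h₁)
    refine (hlim v₁ h₁ v₂ h₂ v₃ h₃ v₄ h₄).congr' ?_
    filter_upwards [eventually_gt_atTop (0 : ℝ)] with r hr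
    congr 1
    have hpt : ∀ g : G,
        (fun g : G => ⟪v₂, π g v₁⟫_ℂ * conj ⟪v₄, π g v₃⟫_ℂ) g⁻¹
          = ⟪v₃, π g v₄⟫_ℂ * conj ⟪v₁, π g v₂⟫_ℂ := by
      intro g
      have e1 : ⟪v₂, π g⁻¹ v₁⟫_ℂ = conj ⟪v₁, π g v₂⟫_ℂ := by
        have := hunit g v₂ (π g⁻¹ v₁)
        have hgg : π g (π g⁻¹ v₁) = v₁ := by
          have : (π g * π g⁻¹) v₁ = v₁ := by
            rw [← map_mul, mul_inv_cancel, map_one]; rfl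
          simpa using this
        rw [hgg] at this
        rw [← this, ← inner_conj_symm]
      have e2 : ⟪v₄, π g⁻¹ v₃⟫_ℂ = conj ⟪v₃, π g v₄⟫_ℂ := by
        have := hunit g v₄ (π g⁻¹ v₃)
        have hgg : π g (π g⁻¹ v₃) = v₃ := by
          have : (π g * π g⁻¹) v₃ = v₃ := by
            rw [← map_mul, mul_inv_cancel, map_one]; rfl
          simpa using this
        rw [hgg] at this
        rw [← this, ← inner_conj_symm]
      simp only [e1, e2, RingHomInvPair.comp_apply_eq, starRingEnd_self_apply]
      ring
    calc ∫ g in S r, ⟪v₂, π g v₁⟫_ℂ * conj ⟪v₄, π g v₃⟫_ℂ ∂μ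
        = ∫ g in S r, (fun g : G => ⟪v₂, π g v₁⟫_ℂ * conj ⟪v₄, π g v₃⟫_ℂ) g⁻¹ ∂μ :=
          (setIntegral_inv_eq μ (hSmeas r hr) (hSinv r hr) _).symm
      _ = ∫ g in S r, ⟪v₃, π g v₄⟫_ℂ * conj ⟪v₁, π g v₂⟫_ℂ ∂μ := by
          exact setIntegral_congr_fun (hSmeas r hr) (fun g _ => hpt g)
  intro v₁ h₁ v₂ h₂ v₃ h₃ v₄ h₄
  have hAv₂ := hAV v₂ h₂
  have hAv₄ := hAV v₄ h₄
  rw [hsym v₁ h₁ (A v₂) hAv₂ v₃ h₃ v₄ h₄]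
  have := hD v₄ h₄ v₃ h₃ v₂ h₂ v₁ h₁
  rw [eq_neg_iff_add_eq_zero] at this ⊢
  rw [hsym v₁ h₁ v₂ h₂ v₃ h₃ (A v₄) hAv₄]
  linear_combination this
end

section
/- Let G be a second-countable, locally compact topological group with Haar measure μ, let (π,H) be a unitary representation of G, let d be a natural number, and let (S_r)_{r>0} be a family of measurable subsets of G with μ(S_r) < ∞ for every r. Let V ⊆ H be a ℂ-linear subspace and suppose that for all v, w ∈ V the limit lim_{r→∞} r^{-d} ∫_{S_r} |⟨π(g)v, w⟩|² dμ(g) exists in ℂ. Then for all v₁, v₂, v₃, v₄ ∈ V the limit D(v₁,v₂,v₃,v₄) := lim_{r→∞} r^{-d} ∫_{S_r} ⟨π(g)v₁,v₂⟩ · conj(⟨π(g)v₃,v₄⟩) dμ(g) exists; moreover the resulting function D is ℂ-linear in v₁ and in v₄, and conjugate-linear in v₂ and in v₃. -/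
open MeasureTheory Filter ComplexConjugate
open scoped InnerProductSpace ENNReal Topology

set_option maxHeartbeats 1000000 in
/-- Double polarisation identity for complex numbers. -/
lemma polar_aux (x y z t : ℂ) :
    x * conj t = (16:ℂ)⁻¹ * ∑ a ∈ Finset.range 4, ∑ b ∈ Finset.range 4,
      (Complex.I^a * conj (Complex.I^b)) *
        ((x + Complex.I^a * y + conj (Complex.I^b) * z
           + Complex.I^a * conj (Complex.I^b) * t) *
         conj (x + Complex.I^a * y + conj (Complex.I^b) * z
           + Complex.I^a * conj (Complex.I^b) * t)) := by
  simp only [Finset.sum_range_succ, Finset.sum_range_zero, pow_succ, pow_zero, one_mul,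
    Complex.I_mul_I, map_add, map_mul, map_neg, map_one, Complex.conj_I,
    neg_mul, mul_neg, neg_neg, zero_add]
  ring_nf
  simp only [Complex.I_sq]
  ring

/-- (Polarisation; Section 4.1 of the paper.) If for all `v, w` in a
subspace `V` the limits `lim_{r→∞} r^{-d} ∫_{S_r} |⟨π(g)v,w⟩|² dμ` exist, then the mixed
limits `D(v₁,v₂,v₃,v₄) = lim_{r→∞} r^{-d} ∫_{S_r} ⟨π(g)v₁,v₂⟩ conj ⟨π(g)v₃,v₄⟩ dμ` exist on
`V`, and `D` is ℂ-linear in the first and fourth variables and conjugate-linear in the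
second and third. The paper's inner product `⟨x,y⟩`, linear in the first variable, is
rendered as Mathlib's `⟪y, x⟫_ℂ`. -/
theorem stmt2 {G H : Type*} [Group G] [TopologicalSpace G] [IsTopologicalGroup G]
    [LocallyCompactSpace G] [SecondCountableTopology G]
    [MeasurableSpace G] [BorelSpace G]
    (μ : Measure G) [μ.IsHaarMeasure]
    [NormedAddCommGroup H] [InnerProductSpace ℂ H]
    (π : G →* (H →L[ℂ] H))
    (hunit : ∀ (g : G) (u w : H), ⟪π g u, π g w⟫_ℂ = ⟪u, w⟫_ℂ)
    (hcont : ∀ u : H, Continuous fun g : G => π g u)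
    (d : ℕ) (S : ℝ → Set G)
    (hSmeas : ∀ r > (0 : ℝ), MeasurableSet (S r))
    (hSfin : ∀ r > (0 : ℝ), μ (S r) < ∞)
    (V : Submodule ℂ H)
    (hsq : ∀ v ∈ V, ∀ w ∈ V, ∃ L : ℂ,
      Tendsto (fun r : ℝ =>
          (r ^ d)⁻¹ • ∫ g in S r, ((‖⟪w, π g v⟫_ℂ‖ : ℂ) ^ 2) ∂μ)
        atTop (𝓝 L)) :
    ∃ D : H → H → H → H → ℂ,
      (∀ v₁ ∈ V, ∀ v₂ ∈ V, ∀ v₃ ∈ V, ∀ v₄ ∈ V,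
        Tendsto (fun r : ℝ =>
            (r ^ d)⁻¹ • ∫ g in S r, ⟪v₂, π g v₁⟫_ℂ * conj ⟪v₄, π g v₃⟫_ℂ ∂μ)
          atTop (𝓝 (D v₁ v₂ v₃ v₄))) ∧
      (∀ c : ℂ, ∀ v₁ ∈ V, ∀ w₁ ∈ V, ∀ v₂ ∈ V, ∀ v₃ ∈ V, ∀ v₄ ∈ V,
        D (c • v₁ + w₁) v₂ v₃ v₄ = c * D v₁ v₂ v₃ v₄ + D w₁ v₂ v₃ v₄) ∧
      (∀ c : ℂ, ∀ v₁ ∈ V, ∀ v₂ ∈ V, ∀ w₂ ∈ V, ∀ v₃ ∈ V, ∀ v₄ ∈ V,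
        D v₁ (c • v₂ + w₂) v₃ v₄ = conj c * D v₁ v₂ v₃ v₄ + D v₁ w₂ v₃ v₄) ∧
      (∀ c : ℂ, ∀ v₁ ∈ V, ∀ v₂ ∈ V, ∀ v₃ ∈ V, ∀ w₃ ∈ V, ∀ v₄ ∈ V,
        D v₁ v₂ (c • v₃ + w₃) v₄ = conj c * D v₁ v₂ v₃ v₄ + D v₁ v₂ w₃ v₄) ∧
      (∀ c : ℂ, ∀ v₁ ∈ V, ∀ v₂ ∈ V, ∀ v₃ ∈ V, ∀ v₄ ∈ V, ∀ w₄ ∈ V,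
        D v₁ v₂ v₃ (c • v₄ + w₄) = c * D v₁ v₂ v₃ v₄ + D v₁ v₂ v₃ w₄) := by
  classical
  -- π g is isometric
  have hnormπ : ∀ (g : G) (v : H), ‖π g v‖ = ‖v‖ := by
    intro g v
    have h := hunit g v v
    rw [inner_self_eq_norm_sq_to_K, inner_self_eq_norm_sq_to_K] at h
    have h' : (‖π g v‖ : ℝ) ^ 2 = (‖v‖ : ℝ) ^ 2 := by exact_mod_cast h
    exact (sq_eq_sq₀ (norm_nonneg _) (norm_nonneg _)).mp h'
  have hφcont : ∀ v w : H, Continuous (fun g : G => ⟪w, π g v⟫_ℂ) := fun v w =>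
    Continuous.inner continuous_const (hcont v)
  have hφbdd : ∀ (v w : H) (g : G), ‖⟪w, π g v⟫_ℂ‖ ≤ ‖w‖ * ‖v‖ := by
    intro v w g
    calc ‖⟪w, π g v⟫_ℂ‖ ≤ ‖w‖ * ‖π g v‖ := norm_inner_le_norm _ _
    _ = ‖w‖ * ‖v‖ := by rw [hnormπ]
  -- integrability of bounded continuous functions on `S r`
  have hIntGen : ∀ (f : G → ℂ), Continuous f → ∀ C : ℝ, (∀ g, ‖f g‖ ≤ C) →
      ∀ r > (0:ℝ), IntegrableOn f (S r) μ := by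
    intro f hf C hC r hr
    haveI : IsFiniteMeasure (μ.restrict (S r)) :=
      ⟨by rw [Measure.restrict_apply_univ]; exact hSfin r hr⟩
    exact Integrable.mono' (integrable_const C) hf.aestronglyMeasurable.restrict
      (Filter.Eventually.of_forall hC)
  -- integrability of the mixed products
  have hIntProd : ∀ (a b c' e : H), ∀ r > (0:ℝ),
      IntegrableOn (fun g : G => ⟪b, π g a⟫_ℂ * conj ⟪e, π g c'⟫_ℂ) (S r) μ := by
    intro a b c' e r hr
    refine hIntGen _ ((hφcont a b).mul (Complex.continuous_conj.comp (hφcont c' e)))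
      ((‖b‖ * ‖a‖) * (‖e‖ * ‖c'‖)) (fun g => ?_) r hr
    simp only [Pi.mul_apply, Function.comp_apply, norm_mul, RCLike.norm_conj]
    exact mul_le_mul (hφbdd a b g) (hφbdd c' e g) (norm_nonneg _)
      (mul_nonneg (norm_nonneg _) (norm_nonneg _))
  -- integrability of the squared norms
  have hIntSq : ∀ (a b : H), ∀ r > (0:ℝ),
      IntegrableOn (fun g : G => ((‖⟪b, π g a⟫_ℂ‖ : ℂ) ^ 2)) (S r) μ := by
    intro a b r hr
    refine hIntGen _ (((Complex.continuous_ofReal.comp (hφcont a b).norm)).pow 2)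
      ((‖b‖ * ‖a‖) ^ 2) (fun g => ?_) r hr
    simp only [Pi.pow_apply, Function.comp_apply, norm_pow, Complex.norm_real, norm_norm]
    exact pow_le_pow_left₀ (norm_nonneg _) (hφbdd a b g) 2
  -- existence of the mixed limits
  have key : ∀ v₁ ∈ V, ∀ v₂ ∈ V, ∀ v₃ ∈ V, ∀ v₄ ∈ V, ∃ L : ℂ,
      Tendsto (fun r : ℝ =>
          (r ^ d)⁻¹ • ∫ g in S r, ⟪v₂, π g v₁⟫_ℂ * conj ⟪v₄, π g v₃⟫_ℂ ∂μ)
        atTop (𝓝 L) := by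
    intro v₁ h₁ v₂ h₂ v₃ h₃ v₄ h₄
    have hu : ∀ a : ℕ, v₁ + Complex.I ^ a • v₃ ∈ V := fun a =>
      V.add_mem h₁ (V.smul_mem _ h₃)
    have hw : ∀ b : ℕ, v₂ + Complex.I ^ b • v₄ ∈ V := fun b =>
      V.add_mem h₂ (V.smul_mem _ h₄)
    choose L hL using fun a b : ℕ => hsq _ (hu a) _ (hw b)
    refine ⟨(16:ℂ)⁻¹ * ∑ a ∈ Finset.range 4, ∑ b ∈ Finset.range 4,
      (Complex.I^a * conj (Complex.I^b)) * L a b, ?_⟩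
    -- pointwise polarisation
    have hptw : ∀ g : G, ⟪v₂, π g v₁⟫_ℂ * conj ⟪v₄, π g v₃⟫_ℂ
        = (16:ℂ)⁻¹ * ∑ a ∈ Finset.range 4, ∑ b ∈ Finset.range 4,
            (Complex.I^a * conj (Complex.I^b)) *
              ((‖⟪v₂ + Complex.I ^ b • v₄, π g (v₁ + Complex.I ^ a • v₃)⟫_ℂ‖ : ℂ) ^ 2) := by
      intro g
      have hexp : ∀ a b : ℕ, ⟪v₂ + Complex.I ^ b • v₄, π g (v₁ + Complex.I ^ a • v₃)⟫_ℂ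
          = ⟪v₂, π g v₁⟫_ℂ + Complex.I^a * ⟪v₂, π g v₃⟫_ℂ
            + conj (Complex.I^b) * ⟪v₄, π g v₁⟫_ℂ
            + Complex.I^a * conj (Complex.I^b) * ⟪v₄, π g v₃⟫_ℂ := by
        intro a b
        simp only [map_add, _root_.map_smul, inner_add_left, inner_add_right,
          inner_smul_left, inner_smul_right]
        ring
      rw [polar_aux (⟪v₂, π g v₁⟫_ℂ) (⟪v₂, π g v₃⟫_ℂ) (⟪v₄, π g v₁⟫_ℂ) (⟪v₄, π g v₃⟫_ℂ)]
      congr 1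
      refine Finset.sum_congr rfl fun a _ => Finset.sum_congr rfl fun b _ => ?_
      rw [← Complex.mul_conj', hexp a b]
    -- eventual rewriting of the quantity
    have heq : (fun r : ℝ =>
          (16:ℂ)⁻¹ * ∑ a ∈ Finset.range 4, ∑ b ∈ Finset.range 4,
            (Complex.I^a * conj (Complex.I^b)) *
              ((r ^ d)⁻¹ • ∫ g in S r,
                ((‖⟪v₂ + Complex.I ^ b • v₄, π g (v₁ + Complex.I ^ a • v₃)⟫_ℂ‖ : ℂ) ^ 2) ∂μ))
        =ᶠ[atTop] (fun r : ℝ =>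
          (r ^ d)⁻¹ • ∫ g in S r, ⟪v₂, π g v₁⟫_ℂ * conj ⟪v₄, π g v₃⟫_ℂ ∂μ) := by
      filter_upwards [eventually_gt_atTop (0:ℝ)] with r hr
      have hint : ∀ a ∈ Finset.range 4, ∀ b ∈ Finset.range 4, IntegrableOn
          (fun g : G => (Complex.I^a * conj (Complex.I^b)) *
            ((‖⟪v₂ + Complex.I ^ b • v₄, π g (v₁ + Complex.I ^ a • v₃)⟫_ℂ‖ : ℂ) ^ 2)) (S r) μ :=
        fun a _ b _ => (hIntSq _ _ r hr).const_mul _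
      have hC : (∫ g in S r, ⟪v₂, π g v₁⟫_ℂ * conj ⟪v₄, π g v₃⟫_ℂ ∂μ)
          = (16:ℂ)⁻¹ * ∑ a ∈ Finset.range 4, ∑ b ∈ Finset.range 4,
              (Complex.I^a * conj (Complex.I^b)) *
                ∫ g in S r,
                  ((‖⟪v₂ + Complex.I ^ b • v₄, π g (v₁ + Complex.I ^ a • v₃)⟫_ℂ‖ : ℂ) ^ 2) ∂μ := by
        rw [show (fun g : G => ⟪v₂, π g v₁⟫_ℂ * conj ⟪v₄, π g v₃⟫_ℂ)
            = fun g : G => (16:ℂ)⁻¹ * ∑ a ∈ Finset.range 4, ∑ b ∈ Finset.range 4,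
              (Complex.I^a * conj (Complex.I^b)) *
                ((‖⟪v₂ + Complex.I ^ b • v₄, π g (v₁ + Complex.I ^ a • v₃)⟫_ℂ‖ : ℂ) ^ 2)
            from funext hptw]
        rw [integral_const_mul]
        congr 1
        rw [integral_finset_sum _ (fun a ha =>
          integrable_finset_sum _ (fun b hb => hint a ha b hb))]
        refine Finset.sum_congr rfl fun a ha => ?_
        rw [integral_finset_sum _ (fun b hb => hint a ha b hb)]
        exact Finset.sum_congr rfl fun b _ => integral_const_mul _ _
      rw [hC]
      simp only [Finset.sum_range_succ, Finset.sum_range_zero, Complex.real_smul]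
      push_cast
      ring
    -- combine the limits
    refine Tendsto.congr' heq ?_
    exact Tendsto.const_mul _ (tendsto_finset_sum _ fun a _ =>
      tendsto_finset_sum _ fun b _ => Tendsto.const_mul _ (hL a b))
  -- definition of D
  set F : H → H → H → H → ℝ → ℂ := fun v₁ v₂ v₃ v₄ r =>
    (r ^ d)⁻¹ • ∫ g in S r, ⟪v₂, π g v₁⟫_ℂ * conj ⟪v₄, π g v₃⟫_ℂ ∂μ with hFdef
  have hD : ∀ v₁ ∈ V, ∀ v₂ ∈ V, ∀ v₃ ∈ V, ∀ v₄ ∈ V,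
      Tendsto (F v₁ v₂ v₃ v₄) atTop (𝓝 (limUnder atTop (F v₁ v₂ v₃ v₄))) := by
    intro v₁ h₁ v₂ h₂ v₃ h₃ v₄ h₄
    obtain ⟨L, hL⟩ := key v₁ h₁ v₂ h₂ v₃ h₃ v₄ h₄
    rw [hL.limUnder_eq]; exact hL
  refine ⟨fun v₁ v₂ v₃ v₄ => limUnder atTop (F v₁ v₂ v₃ v₄), hD, ?_, ?_, ?_, ?_⟩
  · -- linear in the first variable
    intro c v₁ h₁ w₁ hw₁ v₂ h₂ v₃ h₃ v₄ h₄
    have hmem : c • v₁ + w₁ ∈ V := V.add_mem (V.smul_mem c h₁) hw₁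
    have t0 := hD _ hmem _ h₂ _ h₃ _ h₄
    have t1 := hD _ h₁ _ h₂ _ h₃ _ h₄
    have t2 := hD _ hw₁ _ h₂ _ h₃ _ h₄
    refine tendsto_nhds_unique t0 (Tendsto.congr' ?_ ((t1.const_mul c).add t2))
    filter_upwards [eventually_gt_atTop (0:ℝ)] with r hr
    have hC : (∫ g in S r, ⟪v₂, π g (c • v₁ + w₁)⟫_ℂ * conj ⟪v₄, π g v₃⟫_ℂ ∂μ)
        = c * (∫ g in S r, ⟪v₂, π g v₁⟫_ℂ * conj ⟪v₄, π g v₃⟫_ℂ ∂μ)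
          + ∫ g in S r, ⟪v₂, π g w₁⟫_ℂ * conj ⟪v₄, π g v₃⟫_ℂ ∂μ := by
      rw [← integral_const_mul, ← integral_add ((hIntProd v₁ v₂ v₃ v₄ r hr).const_mul c)
        (hIntProd w₁ v₂ v₃ v₄ r hr)]
      refine integral_congr_ae (Filter.Eventually.of_forall fun g => ?_)
      simp only [map_add, _root_.map_smul, inner_add_right, inner_smul_right]
      ring
    simp only [hFdef, Complex.real_smul]
    rw [hC]; ring
  · -- conjugate-linear in the second variable
    intro c v₁ h₁ v₂ h₂ w₂ hw₂ v₃ h₃ v₄ h₄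
    have hmem : c • v₂ + w₂ ∈ V := V.add_mem (V.smul_mem c h₂) hw₂
    have t0 := hD _ h₁ _ hmem _ h₃ _ h₄
    have t1 := hD _ h₁ _ h₂ _ h₃ _ h₄
    have t2 := hD _ h₁ _ hw₂ _ h₃ _ h₄
    refine tendsto_nhds_unique t0 (Tendsto.congr' ?_ ((t1.const_mul (conj c)).add t2))
    filter_upwards [eventually_gt_atTop (0:ℝ)] with r hr
    have hC : (∫ g in S r, ⟪c • v₂ + w₂, π g v₁⟫_ℂ * conj ⟪v₄, π g v₃⟫_ℂ ∂μ)
        = conj c * (∫ g in S r, ⟪v₂, π g v₁⟫_ℂ * conj ⟪v₄, π g v₃⟫_ℂ ∂μ)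
          + ∫ g in S r, ⟪w₂, π g v₁⟫_ℂ * conj ⟪v₄, π g v₃⟫_ℂ ∂μ := by
      rw [← integral_const_mul, ← integral_add ((hIntProd v₁ v₂ v₃ v₄ r hr).const_mul (conj c))
        (hIntProd v₁ w₂ v₃ v₄ r hr)]
      refine integral_congr_ae (Filter.Eventually.of_forall fun g => ?_)
      simp only [inner_add_left, inner_smul_left]
      ring
    simp only [hFdef, Complex.real_smul]
    rw [hC]; ring
  · -- conjugate-linear in the third variable
    intro c v₁ h₁ v₂ h₂ v₃ h₃ w₃ hw₃ v₄ h₄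
    have hmem : c • v₃ + w₃ ∈ V := V.add_mem (V.smul_mem c h₃) hw₃
    have t0 := hD _ h₁ _ h₂ _ hmem _ h₄
    have t1 := hD _ h₁ _ h₂ _ h₃ _ h₄
    have t2 := hD _ h₁ _ h₂ _ hw₃ _ h₄
    refine tendsto_nhds_unique t0 (Tendsto.congr' ?_ ((t1.const_mul (conj c)).add t2))
    filter_upwards [eventually_gt_atTop (0:ℝ)] with r hr
    have hC : (∫ g in S r, ⟪v₂, π g v₁⟫_ℂ * conj ⟪v₄, π g (c • v₃ + w₃)⟫_ℂ ∂μ)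
        = conj c * (∫ g in S r, ⟪v₂, π g v₁⟫_ℂ * conj ⟪v₄, π g v₃⟫_ℂ ∂μ)
          + ∫ g in S r, ⟪v₂, π g v₁⟫_ℂ * conj ⟪v₄, π g w₃⟫_ℂ ∂μ := by
      rw [← integral_const_mul, ← integral_add ((hIntProd v₁ v₂ v₃ v₄ r hr).const_mul (conj c))
        (hIntProd v₁ v₂ w₃ v₄ r hr)]
      refine integral_congr_ae (Filter.Eventually.of_forall fun g => ?_)
      simp only [map_add, _root_.map_smul, inner_add_right, inner_smul_right, map_mul]
      ring
    simp only [hFdef, Complex.real_smul]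
    rw [hC]; ring
  · -- linear in the fourth variable
    intro c v₁ h₁ v₂ h₂ v₃ h₃ v₄ h₄ w₄ hw₄
    have hmem : c • v₄ + w₄ ∈ V := V.add_mem (V.smul_mem c h₄) hw₄
    have t0 := hD _ h₁ _ h₂ _ h₃ _ hmem
    have t1 := hD _ h₁ _ h₂ _ h₃ _ h₄
    have t2 := hD _ h₁ _ h₂ _ h₃ _ hw₄
    refine tendsto_nhds_unique t0 (Tendsto.congr' ?_ ((t1.const_mul c).add t2))
    filter_upwards [eventually_gt_atTop (0:ℝ)] with r hr
    have hC : (∫ g in S r, ⟪v₂, π g v₁⟫_ℂ * conj ⟪c • v₄ + w₄, π g v₃⟫_ℂ ∂μ)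
        = c * (∫ g in S r, ⟪v₂, π g v₁⟫_ℂ * conj ⟪v₄, π g v₃⟫_ℂ ∂μ)
          + ∫ g in S r, ⟪v₂, π g v₁⟫_ℂ * conj ⟪w₄, π g v₃⟫_ℂ ∂μ := by
      rw [← integral_const_mul, ← integral_add ((hIntProd v₁ v₂ v₃ v₄ r hr).const_mul c)
        (hIntProd v₁ v₂ v₃ w₄ r hr)]
      refine integral_congr_ae (Filter.Eventually.of_forall fun g => ?_)
      simp only [inner_add_left, inner_smul_left, map_add, map_mul, Complex.conj_conj]
      ring
    simp only [hFdef, Complex.real_smul]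
    rw [hC]; ring
end

section
/- Let K be a topological group, let V be a finite-dimensional complex normed vector space, and let π : K → GL(V) be a group homomorphism into the ℂ-linear automorphisms of V. Let B : V × V → ℂ be sesquilinear (additive in each variable, ℂ-linear in the first variable, conjugate-linear in the second). Assume: (a) for every k ∈ K there exists a continuous group homomorphism γ : ℝ → K with γ(1) = k; (b) for every continuous group homomorphism γ : ℝ → K, the map t ↦ π(γ(t)), viewed as a map from ℝ to the space of linear endomorphisms of V, is differentiable on ℝ; and (c) for every such γ and all v, w ∈ V, the derivative at t = 0 of t ↦ B(π(γ(t))v, w) equals minus the derivative at t = 0 of t ↦ B(v, π(γ(t))w). Then B(π(k)v, π(k)w) = B(v, w) for every k ∈ K and all v, w ∈ V. -/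
open ComplexConjugate

/-- (Analytic content of Proposition 2.14.) Let `π` be a representation
of a topological group `K` by ℂ-linear automorphisms of a finite-dimensional complex
normed space `V`, such that every element of `K` lies on a continuous one-parameter
subgroup, `t ↦ π(γ(t))` is differentiable for every such subgroup `γ`, and a sesquilinear
form `B` is infinitesimally skew-invariant along every such subgroup. Then `B` is
`K`-invariant. -/
theorem stmt7 {K V : Type*} [Group K] [TopologicalSpace K] [IsTopologicalGroup K]
    [NormedAddCommGroup V] [NormedSpace ℂ V] [FiniteDimensional ℂ V]
    (π : K →* (V ≃ₗ[ℂ] V))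
    (B : V → V → ℂ)
    (hadd₁ : ∀ v v' w : V, B (v + v') w = B v w + B v' w)
    (hadd₂ : ∀ v w w' : V, B v (w + w') = B v w + B v w')
    (hsmul₁ : ∀ (c : ℂ) (v w : V), B (c • v) w = c * B v w)
    (hsmul₂ : ∀ (c : ℂ) (v w : V), B v (c • w) = conj c * B v w)
    (hone : ∀ k : K, ∃ γ : ℝ → K,
      Continuous γ ∧ (∀ s t : ℝ, γ (s + t) = γ s * γ t) ∧ γ 1 = k)
    (hdiff : ∀ γ : ℝ → K, Continuous γ → (∀ s t : ℝ, γ (s + t) = γ s * γ t) →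
      Differentiable ℝ fun t : ℝ =>
        LinearMap.toContinuousLinearMap (π (γ t)).toLinearMap)
    (hskew : ∀ γ : ℝ → K, Continuous γ → (∀ s t : ℝ, γ (s + t) = γ s * γ t) →
      ∀ v w : V,
        deriv (fun t : ℝ => B (π (γ t) v) w) 0
          = -deriv (fun t : ℝ => B v (π (γ t) w)) 0) :
    ∀ (k : K) (v w : V), B (π k v) (π k w) = B v w := by
  -- B as an ℝ-bilinear map
  have hsm1 : ∀ (r : ℝ) (v w : V), B (r • v) w = r • B v w := by
    intro r v w
    have : (r : ℂ) • v = r • v := by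
      rw [← IsScalarTower.algebraMap_smul ℂ r v]; rfl
    rw [← this, hsmul₁, Complex.real_smul]
  have hsm2 : ∀ (r : ℝ) (v w : V), B v (r • w) = r • B v w := by
    intro r v w
    have : (r : ℂ) • w = r • w := by
      rw [← IsScalarTower.algebraMap_smul ℂ r w]; rfl
    rw [← this, hsmul₂, Complex.real_smul, Complex.conj_ofReal]
  let Bl : V →ₗ[ℝ] V →ₗ[ℝ] ℂ := LinearMap.mk₂ ℝ B hadd₁ hsm1 hadd₂ hsm2
  let Bl2 : V →ₗ[ℝ] (V →L[ℝ] ℂ) :=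
    (LinearMap.toContinuousLinearMap : (V →ₗ[ℝ] ℂ) ≃ₗ[ℝ] (V →L[ℝ] ℂ)).toLinearMap.comp Bl
  let Bc : V →L[ℝ] V →L[ℝ] ℂ := LinearMap.toContinuousLinearMap Bl2
  have hBc : ∀ v w : V, Bc v w = B v w := fun _ _ => rfl
  -- restrict-scalars functional
  let R : (V →L[ℂ] V) →L[ℝ] (V →L[ℝ] V) :=
    ContinuousLinearMap.restrictScalarsL ℂ V V ℝ ℝ
  intro k v w
  obtain ⟨γ, hc, hm, h1⟩ := hone k
  have hγ0 : γ 0 = 1 := by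
    have h := hm 0 0
    rw [add_zero] at h
    exact (mul_eq_left.mp h.symm)
  set Φ : ℝ → (V →L[ℂ] V) :=
    fun t => LinearMap.toContinuousLinearMap (π (γ t)).toLinearMap with hΦdef
  have hΦ : Differentiable ℝ Φ := hdiff γ hc hm
  have happ : ∀ (t : ℝ) (u : V), (R (Φ t)) u = π (γ t) u := fun _ _ => rfl
  -- derivative of the orbit map at a point
  have horbit : ∀ (t₀ : ℝ) (u : V),
      HasDerivAt (fun t : ℝ => R (Φ t) u) (R (deriv Φ t₀) u) t₀ := by
    intro t₀ u
    have h1 : HasDerivAt Φ (deriv Φ t₀) t₀ := (hΦ t₀).hasDerivAt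
    have h2 : HasDerivAt (fun t => R (Φ t)) (R (deriv Φ t₀)) t₀ :=
      (R.hasFDerivAt.comp_hasDerivAt t₀ h1 : HasDerivAt (R ∘ Φ) _ t₀)
    have h3 := h2.clm_apply (hasDerivAt_const t₀ u)
    simpa using h3
  -- key: derivative at 0 of t ↦ B(π(γ t)v', π(γ t)w') is 0
  have key : ∀ v' w' : V,
      HasDerivAt (fun t : ℝ => B (π (γ t) v') (π (γ t) w')) 0 0 := by
    intro v' w'
    set A : V →L[ℝ] V := R (deriv Φ 0) with hA
    have hΦ0 : ∀ u : V, R (Φ 0) u = u := by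
      intro u; rw [happ, hγ0, map_one]; rfl
    -- first-slot derivative
    have hd1 : HasDerivAt (fun t : ℝ => B (π (γ t) v') w') (Bc (A v') w') 0 := by
      have h := (Bc.flip w').hasFDerivAt.comp_hasDerivAt 0 (horbit 0 v')
      have : HasDerivAt (fun t : ℝ => Bc (R (Φ t) v') w') (Bc (A v') w') 0 := by
        exact h
      simpa [hBc, happ] using this
    have hd2 : HasDerivAt (fun t : ℝ => B v' (π (γ t) w')) (Bc v' (A w')) 0 := by
      have h := (Bc v').hasFDerivAt.comp_hasDerivAt 0 (horbit 0 w')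
      have : HasDerivAt (fun t : ℝ => Bc v' (R (Φ t) w')) (Bc v' (A w')) 0 := by
        exact h
      simpa [hBc, happ] using this
    have hsk : Bc (A v') w' = -(Bc v' (A w')) := by
      have := hskew γ hc hm v' w'
      rw [hd1.deriv, hd2.deriv] at this
      exact this
    -- product rule
    have hcfun : HasDerivAt (fun t : ℝ => Bc (R (Φ t) v')) (Bc (A v')) 0 := by
      have h := Bc.hasFDerivAt.comp_hasDerivAt 0 (horbit 0 v')
      exact h
    have hprod := hcfun.clm_apply (horbit 0 w')
    have hzero : Bc (A v') (R (Φ 0) w') + Bc (R (Φ 0) v') (A w') = 0 := by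
      rw [hΦ0, hΦ0, hsk]; ring
    have hfinal : HasDerivAt (fun t : ℝ => Bc (R (Φ t) v') (R (Φ t) w')) 0 0 := by
      rw [← hzero]; exact hprod
    simpa [hBc, happ] using hfinal
  -- the full orbit function has zero derivative everywhere
  set f : ℝ → ℂ := fun t => B (π (γ t) v) (π (γ t) w) with hf
  have hft : ∀ t₀ : ℝ, HasDerivAt f 0 t₀ := by
    intro t₀
    have hg := key (π (γ t₀) v) (π (γ t₀) w)
    have hsub : HasDerivAt (fun s : ℝ => s - t₀) 1 t₀ := by
      simpa using (hasDerivAt_id t₀).sub_const t₀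
    have hg' : HasDerivAt (fun s : ℝ => B (π (γ s) v) (π (γ s) w)) ((1:ℝ) • (0:ℂ)) t₀ := by
      have hg0 : HasDerivAt (fun t : ℝ => B (π (γ t) (π (γ t₀) v)) (π (γ t) (π (γ t₀) w))) 0
          (t₀ - t₀) := by simpa using hg
      have hcomp := HasDerivAt.scomp (h := fun s : ℝ => s - t₀) t₀ hg0 hsub
      have heq : (fun s : ℝ => B (π (γ (s - t₀)) (π (γ t₀) v)) (π (γ (s - t₀)) (π (γ t₀) w)))
          = fun s : ℝ => B (π (γ s) v) (π (γ s) w) := by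
        funext s
        have : γ (s - t₀) * γ t₀ = γ s := by
          rw [← hm]; ring_nf
        rw [← this, map_mul]
        rfl
      rw [← heq]
      exact hcomp
    simpa using hg'
  have hfd : Differentiable ℝ f := fun t => (hft t).differentiableAt
  have hfc : f 1 = f 0 :=
    is_const_of_deriv_eq_zero hfd (fun t => (hft t).deriv) 1 0
  have : f 1 = B (π k v) (π k w) := by rw [hf]; simp [h1]
  rw [← this, hfc, hf]
  simp [hγ0]
end
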